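/- arXiv:2603.13712 — 2 statements merged into one kernel-verified Lean document; each statement's English description precedes it below -/
import Mathlib

section
/- Let Λ₁, Λ₂ : M_n(ℂ) → M_n(ℂ) be linear maps such that Λ₂ = V ∘ Λ₁ for some linear map V : M_n(ℂ) → M_n(ℂ) that is positive and trace-preserving. Then for every matrix A ∈ M_n(ℂ), ‖Λ₂(A)‖₁ ≤ ‖Λ₁(A)‖₁. In particular, for any two density matrices ρ₁, ρ₂, the distinguishability change ΔD = ½‖Λ₂(ρ₂ − ρ₁)‖₁ − ½‖Λ₁(ρ₂ − ρ₁)‖₁ satisfies ΔD ≤ 0. -/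
open scoped ComplexOrder

/-- The trace norm (Schatten 1-norm) of a complex matrix: `‖A‖₁ = Tr √(Aᴴ A)`. -/
noncomputable def traceNorm {m : Type*} [Fintype m] [DecidableEq m]
    (A : Matrix m m ℂ) : ℝ :=
  (((Matrix.posSemidef_conjTranspose_mul_self A).1.eigenvectorUnitary.1 *
      Matrix.diagonal (((↑) : ℝ → ℂ) ∘ Real.sqrt ∘ (Matrix.posSemidef_conjTranspose_mul_self A).1.eigenvalues) *
      (star (Matrix.posSemidef_conjTranspose_mul_self A).1.eigenvectorUnitary : Matrix m m ℂ)).trace).re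

/-- A map between matrix algebras is positive if it sends positive semidefinite
matrices to positive semidefinite matrices. -/
def IsPositiveMap {m d : Type*} [Fintype m] [Fintype d]
    (Φ : Matrix m m ℂ → Matrix d d ℂ) : Prop :=
  ∀ X : Matrix m m ℂ, X.PosSemidef → (Φ X).PosSemidef

/-- A map between matrix algebras is trace-preserving if `Tr (Φ X) = Tr X` for all `X`. -/
def IsTracePreservingMap {m d : Type*} [Fintype m] [Fintype d]
    (Φ : Matrix m m ℂ → Matrix d d ℂ) : Prop :=
  ∀ X : Matrix m m ℂ, (Φ X).trace = X.trace

namespace TNaux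

open Matrix Finset

variable {n : ℕ}

noncomputable def _root_.Matrix.PosSemidef.sqrt {Q : Matrix (Fin n) (Fin n) ℂ} (hQ : Q.PosSemidef) :
    Matrix (Fin n) (Fin n) ℂ :=
  hQ.1.eigenvectorUnitary.1 * Matrix.diagonal (((↑) : ℝ → ℂ) ∘ Real.sqrt ∘ hQ.1.eigenvalues) *
    (star hQ.1.eigenvectorUnitary : Matrix (Fin n) (Fin n) ℂ)

lemma _root_.Matrix.PosSemidef.posSemidef_sqrt {Q : Matrix (Fin n) (Fin n) ℂ} (hQ : Q.PosSemidef) :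
    hQ.sqrt.PosSemidef := by
  have hd : (Matrix.diagonal (((↑) : ℝ → ℂ) ∘ Real.sqrt ∘ hQ.1.eigenvalues)).PosSemidef :=
    Matrix.PosSemidef.diagonal (fun i => by
      simp only [Function.comp_apply, Pi.zero_apply, Complex.zero_le_real]
      exact Real.sqrt_nonneg _)
  have := hd.conjTranspose_mul_mul_same
    ((star hQ.1.eigenvectorUnitary : Matrix.unitaryGroup (Fin n) ℂ) : Matrix (Fin n) (Fin n) ℂ)
  unfold Matrix.PosSemidef.sqrt
  convert this using 3
  rw [← Matrix.star_eq_conjTranspose, Unitary.coe_star, star_star]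
  rfl

lemma _root_.Matrix.PosSemidef.sqrt_mul_self {Q : Matrix (Fin n) (Fin n) ℂ} (hQ : Q.PosSemidef) :
    hQ.sqrt * hQ.sqrt = Q := by
  have hU : (star hQ.1.eigenvectorUnitary : Matrix _ _ ℂ) * hQ.1.eigenvectorUnitary.1 = 1 :=
    Matrix.mem_unitaryGroup_iff'.mp hQ.1.eigenvectorUnitary.2
  rw [show hQ.sqrt * hQ.sqrt = hQ.1.eigenvectorUnitary.1 *
      (Matrix.diagonal (((↑) : ℝ → ℂ) ∘ Real.sqrt ∘ hQ.1.eigenvalues) *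
        ((star hQ.1.eigenvectorUnitary : Matrix _ _ ℂ) * hQ.1.eigenvectorUnitary.1) *
        Matrix.diagonal (((↑) : ℝ → ℂ) ∘ Real.sqrt ∘ hQ.1.eigenvalues)) *
      (star hQ.1.eigenvectorUnitary : Matrix _ _ ℂ) by simp only [Matrix.PosSemidef.sqrt, Matrix.mul_assoc]]
  rw [hU, Matrix.mul_one, Matrix.diagonal_mul_diagonal]
  conv_rhs => rw [hQ.1.spectral_theorem]
  simp only [Unitary.conjStarAlgAut_apply]
  congr 3
  ext i
  simp only [Function.comp_apply]
  rw [← Complex.ofReal_mul, Real.mul_self_sqrt (hQ.eigenvalues_nonneg i)]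
  rfl

lemma trace_outer_mul (x y : Fin n → ℂ) (C : Matrix (Fin n) (Fin n) ℂ) :
    (vecMulVec x (star y) * C).trace = star y ⬝ᵥ (C *ᵥ x) := by
  simp only [Matrix.trace, Matrix.diag, Matrix.mul_apply, vecMulVec_apply, dotProduct,
    Matrix.mulVec, Pi.star_apply]
  rw [Finset.sum_comm]
  congr 1; ext b
  rw [Finset.mul_sum]
  congr 1; ext a
  ring

lemma trace_outer (x y : Fin n → ℂ) :
    (vecMulVec x (star y)).trace = star y ⬝ᵥ x := by
  simp only [Matrix.trace, Matrix.diag, vecMulVec_apply, dotProduct, Pi.star_apply]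
  congr 1; ext a; ring

lemma mul_vecMulVec (A : Matrix (Fin n) (Fin n) ℂ) (x y : Fin n → ℂ) :
    A * vecMulVec x y = vecMulVec (A *ᵥ x) y := by
  ext a b
  simp only [Matrix.mul_apply, vecMulVec_apply, Matrix.mulVec, dotProduct, Finset.sum_mul]
  congr 1; ext c; ring

lemma vecMulVec_mul_vecMulVec (x y z w : Fin n → ℂ) :
    vecMulVec x y * vecMulVec z w = (y ⬝ᵥ z) • vecMulVec x w := by
  ext a b
  simp only [Matrix.mul_apply, vecMulVec_apply, Matrix.smul_apply, dotProduct, smul_eq_mul,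
    Finset.sum_mul, Finset.mul_sum]
  congr 1; ext c; ring

lemma vecMulVec_smul_left (c : ℂ) (x y : Fin n → ℂ) :
    vecMulVec (c • x) y = c • vecMulVec x y := by
  ext a b
  simp only [vecMulVec_apply, Matrix.smul_apply, Pi.smul_apply, smul_eq_mul]
  ring

lemma star_vecMulVec (x y : Fin n → ℂ) :
    star (vecMulVec x (star y)) = vecMulVec y (star x) := by
  ext a b
  simp only [Matrix.star_eq_conjTranspose, conjTranspose_apply, vecMulVec_apply, Pi.star_apply,
    star_mul', star_star]
  ring

lemma trace_mul_expand (X N : Matrix (Fin n) (Fin n) ℂ) :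
    (X * N).trace = ∑ a, ∑ b, X a b * N b a := by
  simp [Matrix.trace, Matrix.diag, Matrix.mul_apply]

/-- resolution of identity for an orthonormal family of `n` vectors -/
lemma resolution (v : Fin n → (Fin n → ℂ))
    (hv : ∀ i j, star (v i) ⬝ᵥ v j = if i = j then 1 else 0) :
    ∑ i, vecMulVec (v i) (star (v i)) = 1 := by
  let V : Matrix (Fin n) (Fin n) ℂ := Matrix.of fun a i => v i a
  have h1 : Vᴴ * V = 1 := by
    ext i j
    simpa [Matrix.mul_apply, V, Matrix.one_apply, dotProduct] using hv i j
  have h2 : V * Vᴴ = 1 := mul_eq_one_comm.mp h1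
  calc ∑ i, vecMulVec (v i) (star (v i)) = V * Vᴴ := by
        ext a b
        simp [Matrix.mul_apply, vecMulVec_apply, V, Matrix.sum_apply]
      _ = 1 := h2


noncomputable def toE (u : Fin n → ℂ) : EuclideanSpace ℂ (Fin n) :=
  (WithLp.equiv 2 (Fin n → ℂ)).symm u

lemma inner_toE (u v : Fin n → ℂ) : (inner (𝕜 := ℂ) (toE u) (toE v)) = star u ⬝ᵥ v := by
  simp [toE, PiLp.inner_apply, RCLike.inner_apply, dotProduct, mul_comm]

lemma norm_toE (u : Fin n → ℂ) : ‖toE u‖ = Real.sqrt (star u ⬝ᵥ u).re := by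
  rw [@norm_eq_sqrt_re_inner ℂ, inner_toE]
  norm_num

lemma abs_dot_le (a b : Fin n → ℂ) :
    ‖star a ⬝ᵥ b‖ ≤
      Real.sqrt (star a ⬝ᵥ a).re * Real.sqrt (star b ⬝ᵥ b).re := by
  calc ‖star a ⬝ᵥ b‖ = ‖inner (𝕜 := ℂ) (toE a) (toE b)‖ := by
        rw [inner_toE]
    _ ≤ ‖toE a‖ * ‖toE b‖ := norm_inner_le_norm _ _
    _ = _ := by rw [norm_toE, norm_toE]

lemma psd_cs {Q : Matrix (Fin n) (Fin n) ℂ} (hQ : Q.PosSemidef) (x y : Fin n → ℂ) :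
    ‖star y ⬝ᵥ (Q *ᵥ x)‖ ≤
      Real.sqrt (star y ⬝ᵥ (Q *ᵥ y)).re * Real.sqrt (star x ⬝ᵥ (Q *ᵥ x)).re := by
  have hRH : hQ.sqrt.IsHermitian := hQ.posSemidef_sqrt.1
  have hQRR : Q = hQ.sqrt * hQ.sqrt := (hQ.sqrt_mul_self).symm
  have key : ∀ u v : Fin n → ℂ, star u ⬝ᵥ (Q *ᵥ v) = star (hQ.sqrt *ᵥ u) ⬝ᵥ (hQ.sqrt *ᵥ v) := by
    intro u v
    rw [star_mulVec, hRH.eq, show Q *ᵥ v = hQ.sqrt *ᵥ (hQ.sqrt *ᵥ v) by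
      rw [Matrix.mulVec_mulVec, ← hQRR], dotProduct_mulVec]
  rw [key, key, key]
  exact abs_dot_le _ _

lemma psd_trace_nonneg {P : Matrix (Fin n) (Fin n) ℂ} (hP : P.PosSemidef) :
    0 ≤ P.trace := by
  rw [Matrix.trace]
  apply Finset.sum_nonneg
  intro i _
  have := hP.dotProduct_mulVec_nonneg (Pi.single i 1)
  simpa [Matrix.mulVec_single, dotProduct, Pi.single_apply, Matrix.diag] using this

lemma psd_mul_trace_nonneg {P Q : Matrix (Fin n) (Fin n) ℂ} (hP : P.PosSemidef)
    (hQ : Q.PosSemidef) : 0 ≤ (P * Q).trace := by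
  have hRH : hQ.sqrt.IsHermitian := hQ.posSemidef_sqrt.1
  have h1 : (P * Q).trace = (hQ.sqrt * P * hQ.sqrt).trace := by
    conv_lhs => rw [show P * Q = P * hQ.sqrt * hQ.sqrt by rw [Matrix.mul_assoc, hQ.sqrt_mul_self]]
    rw [Matrix.trace_mul_comm, ← Matrix.mul_assoc]
  rw [h1]
  have : (hQ.sqrt * P * hQ.sqrt).PosSemidef := by
    have := hP.conjTranspose_mul_mul_same hQ.sqrt
    rwa [hRH.eq] at this
  exact psd_trace_nonneg this

lemma outer_mulVec (x y z : Fin n → ℂ) : vecMulVec x y *ᵥ z = (y ⬝ᵥ z) • x := by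
  ext a
  simp only [vecMulVec_apply, Matrix.mulVec, dotProduct, Pi.smul_apply, smul_eq_mul,
    Finset.sum_mul]
  exact Finset.sum_congr rfl fun b _ => by ring

lemma star_dot_flip (x y : Fin n → ℂ) : star y ⬝ᵥ x = star (star x ⬝ᵥ y) := by
  simp only [dotProduct, star_sum, Pi.star_apply, star_mul', star_star]
  congr 1; ext a; ring

lemma posSemidef_outer (x : Fin n → ℂ) : (vecMulVec x (star x)).PosSemidef := by
  refine Matrix.PosSemidef.of_dotProduct_mulVec_nonneg ?_ ?_
  · show (vecMulVec x (star x))ᴴ = vecMulVec x (star x)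
    ext a b
    simp only [Matrix.conjTranspose_apply, vecMulVec_apply, Pi.star_apply, star_mul', star_star]
    ring
  · intro y
    rw [outer_mulVec, dotProduct_smul, smul_eq_mul, star_dot_flip x y]
    exact mul_star_self_nonneg (star x ⬝ᵥ y)



lemma svd (B : Matrix (Fin n) (Fin n) ℂ) :
    ∃ (s : Fin n → ℝ) (u v : Fin n → (Fin n → ℂ)),
      (∀ i, 0 ≤ s i) ∧
      traceNorm B = ∑ i, s i ∧
      B = ∑ i, (s i : ℂ) • vecMulVec (u i) (star (v i)) ∧
      (∀ i j, star (v i) ⬝ᵥ v j = if i = j then 1 else 0) ∧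
      (∀ i j, s i ≠ 0 → s j ≠ 0 → star (u i) ⬝ᵥ u j = if i = j then 1 else 0) ∧
      (∀ i, s i = 0 → u i = 0) ∧
      (∀ i, B *ᵥ v i = (s i : ℂ) • u i) := by
  have h : (Bᴴ * B).PosSemidef := posSemidef_conjTranspose_mul_self B
  have hH : (Bᴴ * B).IsHermitian := h.1
  set μ : Fin n → ℝ := hH.eigenvalues with hμdef
  set v : Fin n → (Fin n → ℂ) := fun i => ⇑(hH.eigenvectorBasis i) with hvdef
  have hnn : ∀ i, 0 ≤ μ i := h.eigenvalues_nonneg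
  set s : Fin n → ℝ := fun i => Real.sqrt (μ i) with hsdef
  have hs2 : ∀ i, (s i) ^ 2 = μ i := fun i => Real.sq_sqrt (hnn i)
  have hBv : ∀ i, (Bᴴ * B) *ᵥ v i = (μ i : ℂ) • v i := by
    intro i
    have := hH.mulVec_eigenvectorBasis i
    rw [RCLike.real_smul_eq_coe_smul (K := ℂ)] at this
    exact this
  have hvorth : ∀ i j, star (v i) ⬝ᵥ v j = if i = j then 1 else 0 := by
    intro i j
    have h1 := orthonormal_iff_ite.mp hH.eigenvectorBasis.orthonormal i j
    rw [show (inner (𝕜 := ℂ) (hH.eigenvectorBasis i) (hH.eigenvectorBasis j)) =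
        star (v i) ⬝ᵥ v j by
      simp only [PiLp.inner_apply, RCLike.inner_apply, dotProduct, Pi.star_apply]
      exact Finset.sum_congr rfl fun x _ => mul_comm _ _] at h1
    exact h1
  set u : Fin n → (Fin n → ℂ) := fun i =>
    if s i = 0 then (0 : Fin n → ℂ) else ((s i : ℂ)⁻¹) • (B *ᵥ v i) with hudef
  have hBdot : ∀ i j, star (B *ᵥ v i) ⬝ᵥ (B *ᵥ v j)
      = (μ j : ℂ) * (if i = j then 1 else 0) := by
    intro i j
    rw [star_mulVec, dotProduct_mulVec, vecMul_vecMul, ← dotProduct_mulVec, hBv,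
      dotProduct_smul, smul_eq_mul, hvorth]
  have hμ0 : ∀ i, s i = 0 → μ i = 0 := by
    intro i hsi
    have h1 := Real.sqrt_eq_zero'.mp hsi
    rcases h1 with h1
    exact le_antisymm h1 (hnn i)
  have hs0 : ∀ i, s i = 0 → B *ᵥ v i = 0 := by
    intro i hsi
    have h2 := hBdot i i
    rw [hμ0 i hsi] at h2
    simp only [if_pos rfl, Complex.ofReal_zero, zero_mul] at h2
    exact dotProduct_star_self_eq_zero.mp h2
  have hBu : ∀ i, B *ᵥ v i = (s i : ℂ) • u i := by
    intro i
    by_cases hsi : s i = 0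
    · rw [hs0 i hsi, hudef]
      simp [hsi]
    · rw [hudef]
      simp only [if_neg hsi]
      rw [smul_smul, mul_inv_cancel₀ (by exact_mod_cast hsi), one_smul]
  have hu0 : ∀ i, s i = 0 → u i = 0 := by
    intro i hsi; rw [hudef]; simp [hsi]
  have huorth : ∀ i j, s i ≠ 0 → s j ≠ 0 → star (u i) ⬝ᵥ u j = if i = j then 1 else 0 := by
    intro i j hi hj
    rw [hudef]
    simp only [if_neg hi, if_neg hj]
    rw [star_smul, smul_dotProduct, dotProduct_smul, hBdot, smul_eq_mul, smul_eq_mul]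
    by_cases hij : i = j
    · subst hij
      simp only [if_pos rfl, if_true, mul_one]
      simp only [star_inv₀, RCLike.star_def, Complex.conj_ofReal]
      rw [← hs2 i]
      have hsne : (s i : ℂ) ≠ 0 := by exact_mod_cast hi
      push_cast
      field_simp
    · simp [hij]
  have hres : ∑ i, vecMulVec (v i) (star (v i)) = 1 := resolution v hvorth
  have hBsum : B = ∑ i, (s i : ℂ) • vecMulVec (u i) (star (v i)) := by
    calc B = B * 1 := by rw [mul_one]
      _ = ∑ i, B * vecMulVec (v i) (star (v i)) := by rw [← hres, Finset.mul_sum]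
      _ = ∑ i, (s i : ℂ) • vecMulVec (u i) (star (v i)) := by
          refine Finset.sum_congr rfl fun i _ => ?_
          rw [mul_vecMulVec, hBu, vecMulVec_smul_left]
  have htr : traceNorm B = ∑ i, s i := by
    have h0 : traceNorm B = ((posSemidef_conjTranspose_mul_self B).sqrt.trace).re := rfl
    rw [h0]
    have h1 : (posSemidef_conjTranspose_mul_self B).sqrt =
        hH.eigenvectorUnitary.1 * diagonal ((↑) ∘ Real.sqrt ∘ hH.eigenvalues) *
          (star hH.eigenvectorUnitary : Matrix (Fin n) (Fin n) ℂ) := rfl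
    rw [h1, Matrix.trace_mul_cycle]
    rw [show (star hH.eigenvectorUnitary : Matrix (Fin n) (Fin n) ℂ) * hH.eigenvectorUnitary.1
        = 1 from Matrix.mem_unitaryGroup_iff'.mp hH.eigenvectorUnitary.2]
    rw [one_mul, Matrix.trace_diagonal]
    rw [Complex.re_sum]
    exact Finset.sum_congr rfl fun i _ => by simp [hsdef, hμdef]
  exact ⟨s, u, v, fun i => Real.sqrt_nonneg _, htr, hBsum, hvorth, huorth, hu0, hBu⟩



section Adjoint

variable {n : ℕ}

lemma lin_comb {ι : Type*} (s : Finset ι) {Φ : Matrix (Fin n) (Fin n) ℂ → Matrix (Fin n) (Fin n) ℂ}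
    (hΦ : IsLinearMap ℂ Φ) (c : ι → ℂ) (P : ι → Matrix (Fin n) (Fin n) ℂ) :
    Φ (∑ i ∈ s, c i • P i) = ∑ i ∈ s, c i • Φ (P i) := by
  let L := IsLinearMap.mk' Φ hΦ
  calc Φ (∑ i ∈ s, c i • P i) = L (∑ i ∈ s, c i • P i) := rfl
    _ = ∑ i ∈ s, c i • L (P i) := by
        rw [map_sum]
        exact Finset.sum_congr rfl fun i _ => L.map_smul _ _
    _ = _ := rfl

lemma eigenvectorBasis_dot {H : Matrix (Fin n) (Fin n) ℂ} (hH : H.IsHermitian) (i j : Fin n) :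
    star (⇑(hH.eigenvectorBasis i)) ⬝ᵥ ⇑(hH.eigenvectorBasis j) = if i = j then 1 else 0 := by
  have h1 := orthonormal_iff_ite.mp hH.eigenvectorBasis.orthonormal i j
  rw [show (inner (𝕜 := ℂ) (hH.eigenvectorBasis i) (hH.eigenvectorBasis j)) =
      star (⇑(hH.eigenvectorBasis i)) ⬝ᵥ ⇑(hH.eigenvectorBasis j) by
    simp only [PiLp.inner_apply, RCLike.inner_apply, dotProduct, Pi.star_apply]
    exact Finset.sum_congr rfl fun x _ => mul_comm _ _] at h1
  exact h1

lemma herm_sum {H : Matrix (Fin n) (Fin n) ℂ} (hH : H.IsHermitian) :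
    H = ∑ i, (hH.eigenvalues i : ℂ) •
      vecMulVec (⇑(hH.eigenvectorBasis i)) (star (⇑(hH.eigenvectorBasis i))) := by
  have hres := resolution (fun i => ⇑(hH.eigenvectorBasis i)) (eigenvectorBasis_dot hH)
  calc H = H * 1 := by rw [mul_one]
    _ = ∑ i, H * vecMulVec (⇑(hH.eigenvectorBasis i)) (star (⇑(hH.eigenvectorBasis i))) := by
        rw [← hres, Finset.mul_sum]
    _ = _ := by
        refine Finset.sum_congr rfl fun i _ => ?_
        rw [mul_vecMulVec]
        have h2 := hH.mulVec_eigenvectorBasis i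
        rw [RCLike.real_smul_eq_coe_smul (K := ℂ)] at h2
        rw [h2, vecMulVec_smul_left]
        rfl

lemma pos_map_hermitian {Φ : Matrix (Fin n) (Fin n) ℂ → Matrix (Fin n) (Fin n) ℂ}
    (hΦ : IsLinearMap ℂ Φ) (hpos : ∀ X, X.PosSemidef → (Φ X).PosSemidef)
    {H : Matrix (Fin n) (Fin n) ℂ} (hH : H.IsHermitian) : (Φ H).IsHermitian := by
  have key : Φ H = ∑ i, (hH.eigenvalues i : ℂ) •
      Φ (vecMulVec (⇑(hH.eigenvectorBasis i)) (star (⇑(hH.eigenvectorBasis i)))) := by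
    conv_lhs => rw [herm_sum hH]
    exact lin_comb _ hΦ _ _
  show (Φ H)ᴴ = Φ H
  rw [key, Matrix.conjTranspose_sum]
  refine Finset.sum_congr rfl fun i _ => ?_
  rw [Matrix.conjTranspose_smul, (hpos _ (posSemidef_outer _)).1.eq]
  congr 1
  exact Complex.conj_ofReal _

lemma pos_map_star {Φ : Matrix (Fin n) (Fin n) ℂ → Matrix (Fin n) (Fin n) ℂ}
    (hΦ : IsLinearMap ℂ Φ) (hpos : ∀ X, X.PosSemidef → (Φ X).PosSemidef)
    (X : Matrix (Fin n) (Fin n) ℂ) : Φ Xᴴ = (Φ X)ᴴ := by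
  obtain ⟨Hm, hHmdef⟩ : ∃ Hm, Hm = (2⁻¹ : ℂ) • (X + Xᴴ) := ⟨_, rfl⟩
  obtain ⟨Km, hKmdef⟩ : ∃ Km, Km = (-(2⁻¹) * Complex.I) • (X - Xᴴ) := ⟨_, rfl⟩
  have hHm : Hm.IsHermitian := by
    show Hmᴴ = Hm
    rw [hHmdef, Matrix.conjTranspose_smul, Matrix.conjTranspose_add,
      Matrix.conjTranspose_conjTranspose]
    rw [show star (2⁻¹ : ℂ) = (2⁻¹ : ℂ) by
      rw [RCLike.star_def, show ((2⁻¹ : ℂ)) = ((2⁻¹ : ℝ) : ℂ) by norm_num, Complex.conj_ofReal]]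
    rw [add_comm Xᴴ X]
  have hKm : Km.IsHermitian := by
    show Kmᴴ = Km
    rw [hKmdef, Matrix.conjTranspose_smul, Matrix.conjTranspose_sub,
      Matrix.conjTranspose_conjTranspose]
    rw [show star (-(2⁻¹ : ℂ) * Complex.I) = (2⁻¹ : ℂ) * Complex.I by
      simp [Complex.ext_iff]]
    rw [show (Xᴴ - X) = -(X - Xᴴ) by rw [neg_sub]]
    rw [smul_neg, ← neg_smul, ← neg_mul]
  have hX : X = Hm + Complex.I • Km := by
    rw [hHmdef, hKmdef, smul_smul]
    rw [show Complex.I * (-(2⁻¹) * Complex.I) = (2⁻¹ : ℂ) by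
      rw [mul_comm, mul_assoc, Complex.I_mul_I]; ring]
    rw [← smul_add, show (X + Xᴴ) + (X - Xᴴ) = X + X by abel, ← two_smul ℂ X, smul_smul]
    norm_num
  have hstarI : star Complex.I = -Complex.I := by rw [RCLike.star_def, Complex.conj_I]
  have hXH : Xᴴ = Hm - Complex.I • Km := by
    conv_lhs => rw [hX]
    rw [Matrix.conjTranspose_add, Matrix.conjTranspose_smul, hHm.eq, hKm.eq, hstarI,
      neg_smul, ← sub_eq_add_neg]
  rw [hXH, show Hm - Complex.I • Km = Hm + (-Complex.I) • Km by rw [neg_smul, ← sub_eq_add_neg],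
    hΦ.map_add, hΦ.map_smul]
  conv_rhs => rw [hX, hΦ.map_add, hΦ.map_smul]
  rw [Matrix.conjTranspose_add, Matrix.conjTranspose_smul,
    (pos_map_hermitian hΦ hpos hHm).eq, (pos_map_hermitian hΦ hpos hKm).eq, hstarI]

/-- the (Hilbert–Schmidt) adjoint of a linear map on matrices -/
noncomputable def adj (Φ : Matrix (Fin n) (Fin n) ℂ → Matrix (Fin n) (Fin n) ℂ)
    (Y : Matrix (Fin n) (Fin n) ℂ) : Matrix (Fin n) (Fin n) ℂ :=
  Matrix.of fun b a => (Φ (single a b 1) * Y).trace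

lemma adj_apply (Φ : Matrix (Fin n) (Fin n) ℂ → Matrix (Fin n) (Fin n) ℂ)
    (Y : Matrix (Fin n) (Fin n) ℂ) (b a : Fin n) :
    adj Φ Y b a = (Φ (single a b 1) * Y).trace := rfl

lemma adj_pairing {Φ : Matrix (Fin n) (Fin n) ℂ → Matrix (Fin n) (Fin n) ℂ}
    (hΦ : IsLinearMap ℂ Φ) (X Y : Matrix (Fin n) (Fin n) ℂ) :
    (Φ X * Y).trace = (X * adj Φ Y).trace := by
  have hX : X = ∑ a : Fin n, ∑ b : Fin n, (X a b) • single a b (1 : ℂ) := by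
    conv_lhs => rw [matrix_eq_sum_single X]
    refine Finset.sum_congr rfl fun a _ => Finset.sum_congr rfl fun b _ => ?_
    rw [smul_single, smul_eq_mul, mul_one]
  conv_lhs => rw [hX]
  have hsplit : Φ (∑ a : Fin n, ∑ b : Fin n, (X a b) • single a b (1 : ℂ))
      = ∑ a : Fin n, ∑ b : Fin n, (X a b) • Φ (single a b (1 : ℂ)) := by
    let L := IsLinearMap.mk' Φ hΦ
    show L _ = _
    rw [map_sum]
    refine Finset.sum_congr rfl fun a _ => ?_
    rw [map_sum]
    exact Finset.sum_congr rfl fun b _ => L.map_smul _ _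
  rw [hsplit, Finset.sum_mul, Matrix.trace_sum]
  rw [trace_mul_expand X (adj Φ Y)]
  refine Finset.sum_congr rfl fun a _ => ?_
  rw [Finset.sum_mul, Matrix.trace_sum]
  refine Finset.sum_congr rfl fun b _ => ?_
  rw [smul_mul_assoc, Matrix.trace_smul, adj_apply, smul_eq_mul]

lemma adj_sum {Φ : Matrix (Fin n) (Fin n) ℂ → Matrix (Fin n) (Fin n) ℂ} {ι : Type*}
    (s : Finset ι) (c : ι → ℂ) (Y : ι → Matrix (Fin n) (Fin n) ℂ) :
    adj Φ (∑ i ∈ s, c i • Y i) = ∑ i ∈ s, c i • adj Φ (Y i) := by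
  ext b a
  rw [adj_apply]
  rw [Matrix.mul_sum, Matrix.trace_sum, Matrix.sum_apply]
  refine Finset.sum_congr rfl fun i _ => ?_
  rw [Matrix.mul_smul, Matrix.trace_smul]
  rfl

lemma adj_one {Φ : Matrix (Fin n) (Fin n) ℂ → Matrix (Fin n) (Fin n) ℂ}
    (htp : ∀ X : Matrix (Fin n) (Fin n) ℂ, (Φ X).trace = X.trace) : adj Φ 1 = 1 := by
  ext b a
  rw [adj_apply, mul_one, htp]
  by_cases hab : a = b
  · subst hab
    rw [Matrix.trace_single_eq_same, Matrix.one_apply_eq]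
  · rw [Matrix.one_apply_ne (Ne.symm hab)]
    rw [Matrix.trace]
    apply Finset.sum_eq_zero
    intro i _
    exact Matrix.single_apply_of_ne _ _ _ _ _
      (by rintro ⟨h1, h2⟩; exact hab (h1.trans h2.symm))

lemma adj_psd {Φ : Matrix (Fin n) (Fin n) ℂ → Matrix (Fin n) (Fin n) ℂ}
    (hΦ : IsLinearMap ℂ Φ) (hpos : ∀ X, X.PosSemidef → (Φ X).PosSemidef)
    {Y : Matrix (Fin n) (Fin n) ℂ} (hY : Y.PosSemidef) : (adj Φ Y).PosSemidef := by
  refine Matrix.PosSemidef.of_dotProduct_mulVec_nonneg ?_ ?_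
  · show (adj Φ Y)ᴴ = adj Φ Y
    ext b a
    rw [Matrix.conjTranspose_apply, adj_apply, adj_apply]
    have h1 : star ((Φ (single b a (1:ℂ)) * Y).trace)
        = ((Φ (single b a (1:ℂ)) * Y)ᴴ).trace := (Matrix.trace_conjTranspose _).symm
    have hstd : (single b a (1:ℂ))ᴴ = single a b 1 := by
      ext i j
      by_cases h1 : a = i <;> by_cases h2 : b = j <;>
        simp [Matrix.conjTranspose_apply, Matrix.single, h1, h2]
    rw [h1, Matrix.conjTranspose_mul, hY.1.eq, ← pos_map_star hΦ hpos, hstd,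
      Matrix.trace_mul_comm]
  · intro x
    have h1 : star x ⬝ᵥ (adj Φ Y *ᵥ x) = (vecMulVec x (star x) * adj Φ Y).trace :=
      (trace_outer_mul x x _).symm
    rw [h1, ← adj_pairing hΦ]
    exact psd_mul_trace_nonneg (hpos _ (posSemidef_outer x)) hY

end Adjoint


section Core

open scoped Matrix.Norms.L2Operator in
noncomputable instance matCStar (n : ℕ) : CStarAlgebra (Matrix (Fin n) (Fin n) ℂ) :=
  { Matrix.instL2OpNormedRing, Matrix.instL2OpNormedAlgebra,
    (inferInstance : StarRing (Matrix (Fin n) (Fin n) ℂ)),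
    (inferInstance : CStarRing (Matrix (Fin n) (Fin n) ℂ)),
    (inferInstance : CompleteSpace (Matrix (Fin n) (Fin n) ℂ)),
    (inferInstance : StarModule ℂ (Matrix (Fin n) (Fin n) ℂ)) with }

variable {n : ℕ}

lemma unitary_decomp {U : Matrix (Fin n) (Fin n) ℂ}
    (hU : U ∈ unitary (Matrix (Fin n) (Fin n) ℂ)) :
    ∃ (T : Finset ℂ) (P : ℂ → Matrix (Fin n) (Fin n) ℂ),
      (∀ l ∈ T, ‖l‖ = 1) ∧ (∀ l ∈ T, (P l).PosSemidef) ∧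
      (∑ l ∈ T, P l = 1) ∧ U = ∑ l ∈ T, l • P l := by
  have hnormal : IsStarNormal U := by
    constructor
    rw [commute_iff_eq, (Unitary.mem_iff.mp hU).1, (Unitary.mem_iff.mp hU).2]
  set T : Finset ℂ := (Matrix.finite_spectrum U).toFinset with hTdef
  have hT : ∀ z, z ∈ T ↔ z ∈ spectrum ℂ U := fun z => Set.Finite.mem_toFinset _
  have hinj : Set.InjOn (id : ℂ → ℂ) T := Function.injective_id.injOn
  set f : ℂ → ℂ → ℂ := fun l z =>
    Polynomial.eval z (Lagrange.interpolate T id (fun w => if w = l then 1 else 0)) with hfdef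
  have hfcont : ∀ l, ContinuousOn (f l) (spectrum ℂ U) :=
    fun l => (Polynomial.continuous _).continuousOn
  have hfnode : ∀ l, ∀ z ∈ spectrum ℂ U, f l z = if z = l then 1 else 0 := by
    intro l z hz
    exact Lagrange.eval_interpolate_at_node _ hinj ((hT z).mpr hz)
  set P : ℂ → Matrix (Fin n) (Fin n) ℂ := fun l => cfc (f l) U with hPdef
  refine ⟨T, P, ?_, ?_, ?_, ?_⟩
  · intro l hl
    have := spectrum.subset_circle_of_unitary (𝕜 := ℂ) hU ((hT l).mp hl)
    rw [mem_sphere_zero_iff_norm] at this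
    rw [this]
  · intro l hl
    have h1 : star (P l) * P l = P l := by
      rw [hPdef]
      rw [← cfc_star (f l) U, ← cfc_mul _ _ U ((hfcont l).star) (hfcont l)]
      apply cfc_congr
      intro z hz
      simp only [hfnode l z hz]
      split_ifs <;> simp
    have h2 := Matrix.posSemidef_conjTranspose_mul_self (P l)
    rw [← Matrix.star_eq_conjTranspose, h1] at h2
    exact h2
  · have h1 : (∑ l ∈ T, P l) = cfc (∑ l ∈ T, f l) U :=
      (cfc_sum f U T (fun l _ => hfcont l)).symm
    rw [h1]
    have h2 : cfc (∑ l ∈ T, f l) U = cfc (fun _ : ℂ => (1 : ℂ)) U := by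
      apply cfc_congr
      intro z hz
      rw [Finset.sum_apply]
      rw [Finset.sum_congr rfl (fun l _ => hfnode l z hz)]
      rw [Finset.sum_ite_eq T z (fun _ => (1:ℂ))]
      simp [(hT z).mpr hz]
    rw [h2]
    exact cfc_const_one ℂ U
  · set g : ℂ → ℂ → ℂ := fun l z => l * f l z with hgdef
    have hgcont : ∀ l, ContinuousOn (g l) (spectrum ℂ U) :=
      fun l => continuousOn_const.mul (hfcont l)
    have h0 : ∀ l, l • P l = cfc (g l) U := by
      intro l
      rw [hPdef]
      exact (cfc_const_mul l (f l) U (hfcont l)).symm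
    have h1 : (∑ l ∈ T, l • P l) = cfc (∑ l ∈ T, g l) U := by
      rw [Finset.sum_congr rfl (fun l _ => h0 l)]
      exact (cfc_sum g U T (fun l _ => hgcont l)).symm
    rw [h1]
    have h2 : cfc (∑ l ∈ T, g l) U = cfc (id : ℂ → ℂ) U := by
      apply cfc_congr
      intro z hz
      rw [Finset.sum_apply]
      simp only [hgdef, id_eq]
      rw [Finset.sum_congr rfl (fun l _ => by rw [hfnode l z hz])]
      rw [show ∑ l ∈ T, l * (if z = l then 1 else 0) = ∑ l ∈ T, (if z = l then z else 0) by
        refine Finset.sum_congr rfl fun l _ => ?_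
        split_ifs with h
        · rw [h, mul_one]
        · rw [mul_zero]]
      rw [Finset.sum_ite_eq T z (fun _ => z)]
      simp [(hT z).mpr hz]
    rw [h2, cfc_id ℂ U]

lemma dot_self_re_nonneg (w : Fin n → ℂ) : 0 ≤ (star w ⬝ᵥ w).re := by
  have := (Matrix.PosSemidef.one (n := Fin n) (R := ℂ)).re_dotProduct_nonneg w
  rwa [Matrix.one_mulVec] at this

lemma core {Φ : Matrix (Fin n) (Fin n) ℂ → Matrix (Fin n) (Fin n) ℂ}
    (hΦ : IsLinearMap ℂ Φ) (hpos : ∀ X, X.PosSemidef → (Φ X).PosSemidef)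
    (htp : ∀ X : Matrix (Fin n) (Fin n) ℂ, (Φ X).trace = X.trace)
    {U : Matrix (Fin n) (Fin n) ℂ} (hU : U ∈ unitary (Matrix (Fin n) (Fin n) ℂ))
    (x y : Fin n → ℂ) (hx : (star x ⬝ᵥ x).re ≤ 1) (hy : (star y ⬝ᵥ y).re ≤ 1) :
    ‖star y ⬝ᵥ (adj Φ U *ᵥ x)‖ ≤ 1 := by
  obtain ⟨T, P, hl1, hPpsd, hPsum, hUeq⟩ := unitary_decomp hU
  set Q : ℂ → Matrix (Fin n) (Fin n) ℂ := fun l => adj Φ (P l) with hQdef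
  have hQpsd : ∀ l ∈ T, (Q l).PosSemidef := fun l hl => adj_psd hΦ hpos (hPpsd l hl)
  have hadjU : adj Φ U = ∑ l ∈ T, l • Q l := by rw [hUeq, adj_sum]
  have hQsum : ∑ l ∈ T, Q l = 1 := by
    have h1 : adj Φ (∑ l ∈ T, P l) = ∑ l ∈ T, Q l := by
      have := adj_sum (Φ := Φ) T (fun _ => (1:ℂ)) P
      simpa [one_smul] using this
    rw [hPsum] at h1
    rw [← h1, adj_one htp]
  have hdot : ∀ (w z : Fin n → ℂ), star z ⬝ᵥ (adj Φ U *ᵥ w)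
      = ∑ l ∈ T, l * (star z ⬝ᵥ (Q l *ᵥ w)) := by
    intro w z
    rw [← trace_outer_mul w z, hadjU, Matrix.mul_sum, Matrix.trace_sum]
    refine Finset.sum_congr rfl fun l _ => ?_
    rw [Matrix.mul_smul, Matrix.trace_smul, smul_eq_mul, trace_outer_mul]
  have hdot1 : ∀ (w : Fin n → ℂ), ∑ l ∈ T, (star w ⬝ᵥ (Q l *ᵥ w)).re = (star w ⬝ᵥ w).re := by
    intro w
    rw [← Complex.re_sum]
    congr 1
    have h2 : ∑ l ∈ T, star w ⬝ᵥ (Q l *ᵥ w)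
        = (vecMulVec w (star w) * (∑ l ∈ T, Q l)).trace := by
      rw [Matrix.mul_sum, Matrix.trace_sum]
      exact Finset.sum_congr rfl fun l _ => (trace_outer_mul w w (Q l)).symm
    rw [h2, hQsum, mul_one, trace_outer]
  rw [hdot x y]
  have step1 : ‖∑ l ∈ T, l * (star y ⬝ᵥ (Q l *ᵥ x))‖
      ≤ ∑ l ∈ T, Real.sqrt (star y ⬝ᵥ (Q l *ᵥ y)).re * Real.sqrt (star x ⬝ᵥ (Q l *ᵥ x)).re := by
    refine (norm_sum_le _ _).trans ?_
    refine Finset.sum_le_sum fun l hl => ?_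
    rw [norm_mul, hl1 l hl, one_mul]
    exact psd_cs (hQpsd l hl) x y
  refine step1.trans ?_
  have hα : ∀ l ∈ T, 0 ≤ (star y ⬝ᵥ (Q l *ᵥ y)).re := by
    intro l hl
    simpa using (hQpsd l hl).re_dotProduct_nonneg y
  have hβ : ∀ l ∈ T, 0 ≤ (star x ⬝ᵥ (Q l *ᵥ x)).re := by
    intro l hl
    simpa using (hQpsd l hl).re_dotProduct_nonneg x
  have hcs := Finset.sum_mul_sq_le_sq_mul_sq T
    (fun l => Real.sqrt (star y ⬝ᵥ (Q l *ᵥ y)).re) (fun l => Real.sqrt (star x ⬝ᵥ (Q l *ᵥ x)).re)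
  rw [Finset.sum_congr rfl (fun l hl => Real.sq_sqrt (hα l hl)),
      Finset.sum_congr rfl (fun l hl => Real.sq_sqrt (hβ l hl)), hdot1 y, hdot1 x] at hcs
  have hprod : (star y ⬝ᵥ y).re * (star x ⬝ᵥ x).re ≤ 1 :=
    mul_le_one₀ hy (dot_self_re_nonneg x) hx
  have hsq : (∑ l ∈ T, Real.sqrt (star y ⬝ᵥ (Q l *ᵥ y)).re
      * Real.sqrt (star x ⬝ᵥ (Q l *ᵥ x)).re) ^ 2 ≤ 1 := hcs.trans hprod
  have hnn : 0 ≤ ∑ l ∈ T, Real.sqrt (star y ⬝ᵥ (Q l *ᵥ y)).re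
      * Real.sqrt (star x ⬝ᵥ (Q l *ᵥ x)).re :=
    Finset.sum_nonneg fun l _ => mul_nonneg (Real.sqrt_nonneg _) (Real.sqrt_nonneg _)
  nlinarith [hsq, hnn]

end Core


section Main

variable {n : ℕ}

lemma trace_norm_contraction {Φ : Matrix (Fin n) (Fin n) ℂ → Matrix (Fin n) (Fin n) ℂ}
    (hΦ : IsLinearMap ℂ Φ) (hpos : ∀ X, X.PosSemidef → (Φ X).PosSemidef)
    (htp : ∀ X : Matrix (Fin n) (Fin n) ℂ, (Φ X).trace = X.trace)
    (B : Matrix (Fin n) (Fin n) ℂ) :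
    traceNorm (Φ B) ≤ traceNorm B := by
  obtain ⟨t, u, w, htnn, htr, hCsum, hworth, huorth, hu0, hCw⟩ := svd (Φ B)
  -- extend the left singular vectors to an orthonormal basis
  have hext : ∃ b : OrthonormalBasis (Fin n) ℂ (EuclideanSpace ℂ (Fin n)),
      ∀ k, t k ≠ 0 → (⇑(b k) : Fin n → ℂ) = u k := by
    have hcard : Module.finrank ℂ (EuclideanSpace ℂ (Fin n)) = Fintype.card (Fin n) := by
      simp [finrank_euclideanSpace]
    have horth : Orthonormal ℂ (({k | t k ≠ 0} : Set (Fin n)).restrict (fun k => toE (u k))) := by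
      rw [orthonormal_iff_ite]
      intro i j
      have h1 : (inner (𝕜 := ℂ) (toE (u i.1)) (toE (u j.1))) = star (u i.1) ⬝ᵥ u j.1 :=
        inner_toE _ _
      calc (inner (𝕜 := ℂ) (({k | t k ≠ 0} : Set (Fin n)).restrict (fun k => toE (u k)) i)
              (({k | t k ≠ 0} : Set (Fin n)).restrict (fun k => toE (u k)) j))
          = star (u i.1) ⬝ᵥ u j.1 := h1
        _ = if i = j then 1 else 0 := by
            rw [huorth i.1 j.1 i.2 j.2]
            by_cases hij : i = j
            · simp [hij]
            · have : (i : Fin n) ≠ (j : Fin n) := fun hc => hij (Subtype.ext hc)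
              simp [hij, this]
    obtain ⟨b, hb⟩ := horth.exists_orthonormalBasis_extension_of_card_eq hcard
    refine ⟨b, fun k hk => ?_⟩
    rw [hb k hk]
    rfl
  obtain ⟨b, hb⟩ := hext
  have hutorth : ∀ i j, star (⇑(b i) : Fin n → ℂ) ⬝ᵥ (⇑(b j) : Fin n → ℂ)
      = if i = j then 1 else 0 := by
    intro i j
    have h1 := orthonormal_iff_ite.mp b.orthonormal i j
    rw [show (inner (𝕜 := ℂ) (b i) (b j)) = star (⇑(b i) : Fin n → ℂ) ⬝ᵥ (⇑(b j) : Fin n → ℂ) by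
      simp only [PiLp.inner_apply, RCLike.inner_apply, dotProduct, Pi.star_apply]
      exact Finset.sum_congr rfl fun x _ => mul_comm _ _] at h1
    exact h1
  have hres := resolution (fun k => (⇑(b k) : Fin n → ℂ)) hutorth
  obtain ⟨W, hWdef⟩ : ∃ W, W = ∑ k, vecMulVec (w k) (star (⇑(b k) : Fin n → ℂ)) := ⟨_, rfl⟩
  have hWstar : star W = ∑ k, vecMulVec (⇑(b k) : Fin n → ℂ) (star (w k)) := by
    rw [hWdef, star_sum]
    exact Finset.sum_congr rfl fun k _ => star_vecMulVec _ _
  have hWU : W ∈ unitary (Matrix (Fin n) (Fin n) ℂ) := by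
    rw [Unitary.mem_iff]
    have h1 : star W * W = 1 := by
      rw [hWstar, hWdef, Finset.sum_mul_sum]
      have h2 : ∀ k, ∑ l, vecMulVec (⇑(b k) : Fin n → ℂ) (star (w k))
          * vecMulVec (w l) (star (⇑(b l) : Fin n → ℂ))
          = vecMulVec (⇑(b k) : Fin n → ℂ) (star (⇑(b k) : Fin n → ℂ)) := by
        intro k
        have h3 : ∀ l, vecMulVec (⇑(b k) : Fin n → ℂ) (star (w k))
            * vecMulVec (w l) (star (⇑(b l) : Fin n → ℂ))
            = (if k = l then (1:ℂ) else 0) • vecMulVec (⇑(b k) : Fin n → ℂ)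
                (star (⇑(b l) : Fin n → ℂ)) := by
          intro l
          rw [vecMulVec_mul_vecMulVec, hworth k l]
        rw [Finset.sum_congr rfl (fun l _ => h3 l)]
        simp [ite_smul]
      rw [Finset.sum_congr rfl (fun k _ => h2 k)]
      exact hres
    exact ⟨h1, mul_eq_one_comm.mp h1⟩
  have htrace : ((Φ B) * W).trace = ∑ k, (t k : ℂ) := by
    rw [hWdef, Matrix.mul_sum, Matrix.trace_sum]
    refine Finset.sum_congr rfl fun k _ => ?_
    rw [mul_vecMulVec, hCw k]
    by_cases hk : t k = 0
    · rw [hk, hu0 k hk, trace_outer]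
      simp
    · have hbk : (⇑(b k) : Fin n → ℂ) = u k := hb k hk
      rw [hbk, vecMulVec_smul_left, Matrix.trace_smul, trace_outer, huorth k k hk hk]
      simp
  obtain ⟨sB, xB, yB, hsnn, hsB, hBsum, hyorth, hxorth, hx0, hBv⟩ := svd B
  have hpair : ((Φ B) * W).trace = (B * adj Φ W).trace := adj_pairing hΦ B W
  have hexp : (B * adj Φ W).trace = ∑ i, (sB i : ℂ) * (star (yB i) ⬝ᵥ (adj Φ W *ᵥ xB i)) := by
    conv_lhs => rw [hBsum]
    rw [Finset.sum_mul, Matrix.trace_sum]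
    refine Finset.sum_congr rfl fun i _ => ?_
    rw [smul_mul_assoc, Matrix.trace_smul, trace_outer_mul, smul_eq_mul]
  have hfinal : traceNorm (Φ B) = (((Φ B) * W).trace).re := by
    rw [htr, htrace, Complex.re_sum]
    simp
  rw [hfinal, hpair, hexp, Complex.re_sum]
  have hbound : ∀ i, ((sB i : ℂ) * (star (yB i) ⬝ᵥ (adj Φ W *ᵥ xB i))).re ≤ sB i := by
    intro i
    rw [Complex.re_ofReal_mul]
    have hyb : (star (yB i) ⬝ᵥ yB i).re ≤ 1 := by
      rw [hyorth i i]
      simp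
    have hxb : (star (xB i) ⬝ᵥ xB i).re ≤ 1 := by
      by_cases hi : sB i = 0
      · rw [hx0 i hi]
        simp
      · rw [hxorth i i hi hi]
        simp
    have hcore := core hΦ hpos htp hWU (xB i) (yB i) hxb hyb
    calc sB i * (star (yB i) ⬝ᵥ (adj Φ W *ᵥ xB i)).re
        ≤ sB i * ‖star (yB i) ⬝ᵥ (adj Φ W *ᵥ xB i)‖ :=
          mul_le_mul_of_nonneg_left (Complex.re_le_norm _) (hsnn i)
      _ ≤ sB i * 1 := mul_le_mul_of_nonneg_left hcore (hsnn i)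
      _ = sB i := mul_one _
  calc ∑ i, ((sB i : ℂ) * (star (yB i) ⬝ᵥ (adj Φ W *ᵥ xB i))).re
      ≤ ∑ i, sB i := Finset.sum_le_sum fun i _ => hbound i
    _ = traceNorm B := hsB.symm

end Main
end TNaux


/-- if `Λ₂ = V ∘ Λ₁` for some positive trace-preserving linear map `V`,
then `‖Λ₂(A)‖₁ ≤ ‖Λ₁(A)‖₁` for every matrix `A`; in particular, for any two density
matrices `ρ₁, ρ₂`, the distinguishability change
`ΔD = ½‖Λ₂(ρ₂ − ρ₁)‖₁ − ½‖Λ₁(ρ₂ − ρ₁)‖₁` is nonpositive. -/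
theorem traceNorm_antitone_of_pDivisible
    {n : ℕ} (Λ₁ Λ₂ V : Matrix (Fin n) (Fin n) ℂ → Matrix (Fin n) (Fin n) ℂ)
    (hΛ₁ : IsLinearMap ℂ Λ₁) (hΛ₂ : IsLinearMap ℂ Λ₂) (hV : IsLinearMap ℂ V)
    (hVpos : IsPositiveMap V) (hVtp : IsTracePreservingMap V)
    (hcomp : Λ₂ = V ∘ Λ₁) :
    (∀ A : Matrix (Fin n) (Fin n) ℂ, traceNorm (Λ₂ A) ≤ traceNorm (Λ₁ A)) ∧
    (∀ ρ₁ ρ₂ : Matrix (Fin n) (Fin n) ℂ,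
      ρ₁.PosSemidef → ρ₁.trace = 1 → ρ₂.PosSemidef → ρ₂.trace = 1 →
      (1 / 2 : ℝ) * traceNorm (Λ₂ (ρ₂ - ρ₁)) - (1 / 2 : ℝ) * traceNorm (Λ₁ (ρ₂ - ρ₁)) ≤ 0) := by
  have main : ∀ A : Matrix (Fin n) (Fin n) ℂ, traceNorm (Λ₂ A) ≤ traceNorm (Λ₁ A) := by
    intro A
    have h : Λ₂ A = V (Λ₁ A) := by rw [hcomp]; rfl
    rw [h]
    exact TNaux.trace_norm_contraction hV hVpos hVtp (Λ₁ A)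
  refine ⟨main, fun ρ₁ ρ₂ _ _ _ _ => ?_⟩
  have := main (ρ₂ - ρ₁)
  linarith
end

section
/- Let P₊ and P₋ be orthogonal projectors in M_m(ℂ) with P₊ P₋ = 0, and set P₀ = I − P₊ − P₋. Let E be a Hermitian matrix with 0 ≤ E ≤ I, Tr(E P₊) = Tr(P₊), and Tr(E P₋) = 0. Then E = P₊ + E₀ for some Hermitian E₀ with 0 ≤ E₀ ≤ P₀; in particular E acts as the identity on the range of P₊ and vanishes on the range of P₋. -/
open scoped ComplexOrder
open Matrix
open scoped MatrixOrder

lemma psd_trace_zero {n : ℕ} {A : Matrix (Fin n) (Fin n) ℂ}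
    (hA : A.PosSemidef) (h : A.trace = 0) : A = 0 := by
  set S := CFC.sqrt A with hSdef
  have hS : S.PosSemidef := (CFC.sqrt_nonneg A).posSemidef
  have hherm : Sᴴ = S := hS.1
  have htr : (Sᴴ * S).trace = 0 := by
    rw [hherm, CFC.sqrt_mul_sqrt_self A hA.nonneg]; exact h
  have hS0 : S = 0 := by
    rw [← Matrix.conjTranspose_mul_self_eq_zero (A := S)]
    have hnn : ∀ i ∈ Finset.univ, (0 : ℂ) ≤ ∑ j, star (S j i) * S j i := by
      intro i _
      exact Finset.sum_nonneg fun j _ => star_mul_self_nonneg _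
    have : ∀ i ∈ Finset.univ, (∑ j, star (S j i) * S j i) = 0 := by
      rw [← Finset.sum_eq_zero_iff_of_nonneg hnn]
      simpa [Matrix.trace, Matrix.diag, Matrix.mul_apply, Matrix.conjTranspose_apply]
        using htr
    ext i j
    rw [Matrix.mul_apply]
    simp only [Matrix.conjTranspose_apply]
    have h2 : ∀ k ∈ Finset.univ, star (S k j) * S k j = 0 := by
      rw [← Finset.sum_eq_zero_iff_of_nonneg fun k _ => star_mul_self_nonneg _]
      exact this j (Finset.mem_univ j)
    simp only [Matrix.zero_apply]
    refine Finset.sum_eq_zero fun k _ => ?_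
    have h0 := h2 k (Finset.mem_univ k)
    have hk : S k j = 0 := by
      rcases mul_eq_zero.mp h0 with h' | h'
      · exact star_eq_zero.mp h'
      · exact h'
    simp [hk]
  have : A = S * S := (CFC.sqrt_mul_sqrt_self A hA.nonneg).symm
  rw [this, hS0, Matrix.mul_zero]

lemma psd_mul_eq_zero {n : ℕ} {A P : Matrix (Fin n) (Fin n) ℂ}
    (hA : A.PosSemidef) (hP : Pᴴ = P) (h : P * A * P = 0) : A * P = 0 := by
  set S := CFC.sqrt A with hSdef
  have hS : S.PosSemidef := (CFC.sqrt_nonneg A).posSemidef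
  have hherm : Sᴴ = S := hS.1
  have hA' : A = S * S := (CFC.sqrt_mul_sqrt_self A hA.nonneg).symm
  have h2 : (S * P)ᴴ * (S * P) = 0 := by
    rw [Matrix.conjTranspose_mul, hherm, hP]
    calc P * S * (S * P) = P * (S * S) * P := by noncomm_ring
    _ = 0 := by rw [← hA']; exact h
  have hSP : S * P = 0 := Matrix.conjTranspose_mul_self_eq_zero.mp h2
  rw [hA', Matrix.mul_assoc, hSP, Matrix.mul_zero]

/-- let `P₊, P₋` be orthogonal projectors with `P₊ P₋ = 0` and
`P₀ = I − P₊ − P₋`. If `E` is Hermitian with `0 ≤ E ≤ I`, `Tr(E P₊) = Tr(P₊)` and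
`Tr(E P₋) = 0`, then `E = P₊ + E₀` for some Hermitian `E₀` with `0 ≤ E₀ ≤ P₀`;
in particular `E` acts as the identity on the range of `P₊` and vanishes on the range
of `P₋`. -/
theorem povm_element_decomposition
    {m : ℕ} (Pp Pm : Matrix (Fin m) (Fin m) ℂ)
    (hPpHerm : Pp.IsHermitian) (hPpIdem : Pp * Pp = Pp)
    (hPmHerm : Pm.IsHermitian) (hPmIdem : Pm * Pm = Pm)
    (horth : Pp * Pm = 0)
    (P0 : Matrix (Fin m) (Fin m) ℂ) (hP0 : P0 = 1 - Pp - Pm)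
    (E : Matrix (Fin m) (Fin m) ℂ) (hEHerm : E.IsHermitian)
    (hEpos : E.PosSemidef) (hEle : ((1 : Matrix (Fin m) (Fin m) ℂ) - E).PosSemidef)
    (hTrp : (E * Pp).trace = Pp.trace) (hTrm : (E * Pm).trace = 0) :
    (∃ E₀ : Matrix (Fin m) (Fin m) ℂ, E₀.IsHermitian ∧
      E₀.PosSemidef ∧ (P0 - E₀).PosSemidef ∧ E = Pp + E₀) ∧
    E * Pp = Pp ∧ E * Pm = 0 := by
  have hPmH : Pmᴴ = Pm := hPmHerm
  have hPpH : Ppᴴ = Pp := hPpHerm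
  have hEH : Eᴴ = E := hEHerm
  -- E * Pm = 0
  have hPmEPm : Pm * E * Pm = 0 := by
    have hpsd : (Pm * E * Pm).PosSemidef := by
      have := hEpos.conjTranspose_mul_mul_same Pm
      rwa [hPmH] at this
    apply psd_trace_zero hpsd
    rw [Matrix.trace_mul_cycle, hPmIdem, Matrix.trace_mul_comm, hTrm]
  have hEPm : E * Pm = 0 := psd_mul_eq_zero hEpos hPmH hPmEPm
  have hPmE : Pm * E = 0 := by
    have := congrArg Matrix.conjTranspose hEPm
    rwa [Matrix.conjTranspose_mul, hEH, hPmH, Matrix.conjTranspose_zero] at this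
  -- (1 - E) * Pp = 0
  have hFH : ((1 : Matrix (Fin m) (Fin m) ℂ) - E)ᴴ = 1 - E := hEle.1
  have hTrF : (((1 : Matrix (Fin m) (Fin m) ℂ) - E) * Pp).trace = 0 := by
    rw [Matrix.sub_mul, Matrix.one_mul, Matrix.trace_sub, hTrp, sub_self]
  have hPpFPp : Pp * ((1 - E)) * Pp = 0 := by
    apply psd_trace_zero
    · have := hEle.conjTranspose_mul_mul_same Pp
      rwa [hPpH] at this
    · have : (Pp * (1 - E) * Pp).trace = ((1 - E) * Pp).trace := by
        rw [Matrix.trace_mul_cycle, hPpIdem, Matrix.trace_mul_comm]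
      rw [this, hTrF]
  have hFPp : (1 - E) * Pp = 0 := psd_mul_eq_zero hEle hPpH hPpFPp
  have hEPp : E * Pp = Pp := by
    have := hFPp
    rw [Matrix.sub_mul, Matrix.one_mul, sub_eq_zero] at this
    exact this.symm
  have hPpE : Pp * E = Pp := by
    have := congrArg Matrix.conjTranspose hEPp
    rwa [Matrix.conjTranspose_mul, hEH, hPpH] at this
  refine ⟨⟨E - Pp, hEHerm.sub hPpHerm, ?_, ?_, by abel⟩, hEPp, hEPm⟩
  · have key : (1 - Pp) * E * (1 - Pp)ᴴ = E - Pp := by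
      rw [Matrix.conjTranspose_sub, Matrix.conjTranspose_one, hPpH]
      simp only [Matrix.sub_mul, Matrix.mul_sub, Matrix.mul_one, Matrix.one_mul,
        hPpE, hEPp, hPpIdem, sub_zero]
      abel
    rw [← key]
    exact hEpos.mul_mul_conjTranspose_same _
  · have key : (1 - Pm) * (1 - E) * (1 - Pm)ᴴ = P0 - (E - Pp) := by
      rw [Matrix.conjTranspose_sub, Matrix.conjTranspose_one, hPmH, hP0]
      simp only [Matrix.sub_mul, Matrix.mul_sub, Matrix.mul_one, Matrix.one_mul,
        hPmE, hEPm, hPmIdem, sub_zero, Matrix.zero_mul]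
      abel
    rw [← key]
    exact hEle.mul_mul_conjTranspose_same _
end
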